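/- Phase-two (back-substitution) interval correctness for a triangular system: let C : Matrix (Fin K) (Fin K) ℝ be upper triangular (C i j = 0 whenever j < i) with elementwise bounds 0 ≤ c̲ ≤ C ≤ c̄ and c̲ i i > 0 for all i, let q, q̲, q̄ : Fin K → ℝ with q̲ ≤ q ≤ q̄ elementwise, and let w : Fin K → ℝ satisfy C.mulVec w = q. Define, recursively for i from K−1 down to 0: s̲_i = Σ_{j > i} c̲_{ij} · w̲_j, s̄_i = Σ_{j > i} c̄_{ij} · w̄_j, w̲_i = (q̲_i − s̄_i) / c̄_{ii}, and w̄_i = (q̄_i − s̲_i) / c̲_{ii}. If w̲_i ≥ 0 for all i, then w̲_i ≤ w_i ≤ w̄_i for all i. -/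

import Mathlib

/-- Phase-two (back-substitution) interval correctness for an upper-triangular system:
if `C` is upper triangular with `0 ≤ c̲ ≤ C ≤ c̄` elementwise, positive diagonal lower
bounds, `q̲ ≤ q ≤ q̄`, `C.mulVec w = q`, and the recursively defined lower bounds
`w̲_i = (q̲_i − Σ_{j>i} c̄_{ij} w̄_j)/c̄_{ii}` are nonnegative, then
`w̲_i ≤ w_i ≤ w̄_i` for all `i`, where `w̄_i = (q̄_i − Σ_{j>i} c̲_{ij} w̲_j)/c̲_{ii}`. -/
theorem interval_back_substitution_correct
    {K : ℕ} (C cl cu : Matrix (Fin K) (Fin K) ℝ)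
    (htri : ∀ i j : Fin K, j < i → C i j = 0)
    (hclnn : ∀ i j : Fin K, 0 ≤ cl i j)
    (hcl : ∀ i j : Fin K, cl i j ≤ C i j) (hcu : ∀ i j : Fin K, C i j ≤ cu i j)
    (hdiag : ∀ i : Fin K, 0 < cl i i)
    (q ql qu : Fin K → ℝ)
    (hql : ∀ i, ql i ≤ q i) (hqu : ∀ i, q i ≤ qu i)
    (w : Fin K → ℝ) (hsol : C.mulVec w = q)
    (wl wu : Fin K → ℝ)
    (hwl : ∀ i : Fin K,
      wl i = (ql i - ∑ j ∈ Finset.univ.filter (fun j => i < j), cu i j * wu j) / cu i i)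
    (hwu : ∀ i : Fin K,
      wu i = (qu i - ∑ j ∈ Finset.univ.filter (fun j => i < j), cl i j * wl j) / cl i i)
    (hwlnn : ∀ i, 0 ≤ wl i) :
    ∀ i, wl i ≤ w i ∧ w i ≤ wu i := by
  have key : ∀ m : ℕ, ∀ i : Fin K, K - i.val ≤ m → wl i ≤ w i ∧ w i ≤ wu i := by
    intro m
    induction m with
    | zero => intro i h; exact absurd h (by have := i.isLt; omega)
    | succ m ih =>
      intro i _
      have IH : ∀ j : Fin K, i < j → wl j ≤ w j ∧ w j ≤ wu j := by
        intro j hj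
        exact ih j (by have := j.isLt; have : i.val < j.val := hj; omega)
      set S := Finset.univ.filter (fun j => i < j) with hS
      have hiS : i ∉ S := by simp [hS]
      have hsum : ∑ j, C i j * w j = C i i * w i + ∑ j ∈ S, C i j * w j := by
        have h1 : (Finset.univ : Finset (Fin K)) =
            insert i S ∪ Finset.univ.filter (fun j => j < i) := by
          ext j
          simp only [Finset.mem_union, Finset.mem_insert, Finset.mem_filter,
            Finset.mem_univ, true_and, hS]
          constructor
          · intro _
            rcases lt_trichotomy i j with h | h | h
            · exact Or.inl (Or.inr h)
            · exact Or.inl (Or.inl h.symm)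
            · exact Or.inr h
          · intro _; trivial
        rw [h1, Finset.sum_union, Finset.sum_insert hiS]
        · have : ∑ j ∈ Finset.univ.filter (fun j => j < i), C i j * w j = 0 := by
            apply Finset.sum_eq_zero
            intro j hj
            simp only [Finset.mem_filter] at hj
            rw [htri i j hj.2, zero_mul]
          rw [this, add_zero]
        · rw [Finset.disjoint_left]
          intro j hj hj'
          simp only [Finset.mem_insert, Finset.mem_filter, Finset.mem_univ, true_and,
            hS] at hj hj'
          rcases hj with h | h
          · exact absurd hj' (by simp [h])
          · exact absurd hj' (not_lt.2 h.le)
      have hq : C i i * w i + ∑ j ∈ S, C i j * w j = q i := by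
        rw [← hsum]
        have := congrFun hsol i
        simpa [Matrix.mulVec, dotProduct] using this
      have hcuii : 0 < cu i i := lt_of_lt_of_le (hdiag i) ((hcl i i).trans (hcu i i))
      have hclii : 0 < cl i i := hdiag i
      -- sum bounds
      have hsum_ub : ∑ j ∈ S, C i j * w j ≤ ∑ j ∈ S, cu i j * wu j := by
        apply Finset.sum_le_sum
        intro j hj
        simp only [Finset.mem_filter, Finset.mem_univ, true_and, hS] at hj
        have hwj := IH j hj
        have hwjnn : 0 ≤ w j := le_trans (hwlnn j) hwj.1
        have hCij : 0 ≤ C i j := le_trans (hclnn i j) (hcl i j)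
        calc C i j * w j ≤ C i j * wu j := by
              exact mul_le_mul_of_nonneg_left hwj.2 hCij
          _ ≤ cu i j * wu j := by
              exact mul_le_mul_of_nonneg_right (hcu i j) (le_trans hwjnn hwj.2)
      have hsum_lb : ∑ j ∈ S, cl i j * wl j ≤ ∑ j ∈ S, C i j * w j := by
        apply Finset.sum_le_sum
        intro j hj
        simp only [Finset.mem_filter, Finset.mem_univ, true_and, hS] at hj
        have hwj := IH j hj
        calc cl i j * wl j ≤ cl i j * w j :=
              mul_le_mul_of_nonneg_left hwj.1 (hclnn i j)
          _ ≤ C i j * w j :=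
              mul_le_mul_of_nonneg_right (hcl i j) (le_trans (hwlnn j) hwj.1)
      have hwl_eq : cu i i * wl i = ql i - ∑ j ∈ S, cu i j * wu j := by
        rw [hwl i]; field_simp; rfl
      have hwu_eq : cl i i * wu i = qu i - ∑ j ∈ S, cl i j * wl j := by
        rw [hwu i]; field_simp; rfl
      have hlow : cu i i * wl i ≤ C i i * w i := by
        have := hql i
        nlinarith [hsum_ub]
      have hwinn : 0 ≤ w i := by
        have hCii : 0 < C i i := lt_of_lt_of_le hclii (hcl i i)
        nlinarith [hwlnn i]
      constructor
      · have hCii : C i i ≤ cu i i := hcu i i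
        nlinarith [hwlnn i]
      · have hhigh : cl i i * w i ≤ cl i i * wu i := by
          have := hqu i
          nlinarith [hsum_lb, mul_le_mul_of_nonneg_right (hcl i i) hwinn]
        exact le_of_mul_le_mul_left hhigh hclii
  intro i
  exact key K i (by omega)
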